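/- Let w and w' be even closed walks in a signed graph whose first vertex terms coincide. Then, choosing the associated binomials appropriately (each is only defined up to sign), the binomial of the concatenation satisfies B⁺_{w+w'} = B⁺_w · B⁺_{w'} and B⁻_{w+w'} = B⁻_w · B⁻_{w'}. -/

import Mathlib

variable {V : Type*}

/-- The product of τ(e,u)·τ(e,v) over all edge terms e = uv of a walk in a signed
graph (G,τ), where the sign τ assigns a unit ±1 to each incidence. -/
def walkSign (G : SimpleGraph V) (τ : Sym2 V → V → ℤˣ) :
    {u v : V} → G.Walk u v → ℤˣ
  | _, _, SimpleGraph.Walk.nil => 1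
  | _, _, @SimpleGraph.Walk.cons _ _ a b _ _ p =>
      τ s(a, b) a * τ s(a, b) b * walkSign G τ p

/-- μ of a closed walk: (-1)^(number of unbalanced vertex terms). -/
def mu (G : SimpleGraph V) (τ : Sym2 V → V → ℤˣ) {u v : V} (w : G.Walk u v) : ℤˣ :=
  (-1) ^ w.length * walkSign G τ w

/-- The i-th dart (oriented edge term) of a walk. -/
def dartAt {G : SimpleGraph V} {u v : V} (w : G.Walk u v) (i : Fin w.length) :
    G.Dart :=
  w.darts.get (Fin.cast w.length_darts.symm i)

/-- Cyclic successor on `Fin n`. -/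
def csucc {n : ℕ} (i : Fin n) : Fin n := ⟨(i + 1) % n, Nat.mod_lt _ i.pos⟩

/-- `FlipRel G τ w κ`: κ assigns a sign ±1 to each edge term of the closed walk w,
flipping exactly at the unbalanced vertex terms (cyclically).  Such a κ records (up
to a global sign) the parity of the balanced section containing each edge term in the
balanced section-decomposition of w, and a κ satisfying this relation exists iff w is
even. -/
def FlipRel (G : SimpleGraph V) (τ : Sym2 V → V → ℤˣ) {v : V} (w : G.Walk v v)
    (κ : Fin w.length → ℤˣ) : Prop :=
  ∀ i : Fin w.length,
    κ (csucc i) =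
      -(τ (dartAt w i).edge (dartAt w i).toProd.2 *
          τ (dartAt w (csucc i)).edge (dartAt w i).toProd.2) * κ i

open MvPolynomial in
/-- The positive monomial B_w⁺ of the binomial associated with an even closed walk w,
relative to the section-parity assignment κ: the product of all edge terms lying in
the sections with κ = 1. -/
noncomputable def Bpos (K : Type*) [Field K] {G : SimpleGraph V} {v : V}
    (w : G.Walk v v) (κ : Fin w.length → ℤˣ) : MvPolynomial G.edgeSet K :=
  ∏ i ∈ Finset.univ.filter (fun i => κ i = 1),
    X (⟨(dartAt w i).edge, (dartAt w i).edge_mem⟩ : G.edgeSet)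

open MvPolynomial in
/-- The negative monomial B_w⁻: the product of all edge terms in sections with κ = -1. -/
noncomputable def Bneg (K : Type*) [Field K] {G : SimpleGraph V} {v : V}
    (w : G.Walk v v) (κ : Fin w.length → ℤˣ) : MvPolynomial G.edgeSet K :=
  ∏ i ∈ Finset.univ.filter (fun i => κ i = -1),
    X (⟨(dartAt w i).edge, (dartAt w i).edge_mem⟩ : G.edgeSet)

open MvPolynomial in
/-- The toric ideal I_{(G,τ)} of a signed graph: the ideal of K[e : e ∈ E(G)]
generated by the binomials e^{b⁺} - e^{b⁻} over integer vectors b in the kernel of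
the incidence matrix A(G,τ). -/
noncomputable def toricIdeal (K : Type*) [Field K] [DecidableEq V]
    (G : SimpleGraph V) [Fintype G.edgeSet] (τ : Sym2 V → V → ℤˣ) :
    Ideal (MvPolynomial G.edgeSet K) :=
  Ideal.span { f | ∃ b : G.edgeSet → ℤ,
    (∀ v : V, ∑ e : G.edgeSet,
      (if v ∈ (e : Sym2 V) then (τ e v : ℤ) else 0) * b e = 0) ∧
    f = (∏ e : G.edgeSet, X e ^ (b e).toNat)
      - ∏ e : G.edgeSet, X e ^ (-(b e)).toNat }

section Aux

open SimpleGraph Finset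

variable {V : Type*} {G : SimpleGraph V}

lemma dartAt_def {u v : V} (w : G.Walk u v) (i : Fin w.length) :
    dartAt w i = w.darts[(i : ℕ)]'(by rw [SimpleGraph.Walk.length_darts]; exact i.2) := rfl

lemma darts_getElem_fst {u v : V} (w : G.Walk u v) (i : ℕ) (h : i < w.darts.length) :
    (w.darts[i]).toProd.1 = w.getVert i := by
  induction w generalizing i with
  | nil => simp at h
  | cons ha p ih =>
    cases i with
    | zero => rfl
    | succ j =>
      rw [SimpleGraph.Walk.getVert_cons_succ]
      exact ih j (by simpa using h)

lemma darts_getElem_snd {u v : V} (w : G.Walk u v) (i : ℕ) (h : i < w.darts.length) :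
    (w.darts[i]).toProd.2 = w.getVert (i + 1) := by
  induction w generalizing i with
  | nil => simp at h
  | cons ha p ih =>
    cases i with
    | zero =>
      simp [SimpleGraph.Walk.getVert_cons_succ, SimpleGraph.Walk.getVert_zero]
    | succ j =>
      rw [SimpleGraph.Walk.getVert_cons_succ]
      exact ih j (by simpa using h)

lemma walkSign_eq_prod (τ : Sym2 V → V → ℤˣ) {u v : V} (w : G.Walk u v) :
    walkSign G τ w =
      (w.darts.map (fun d => τ d.edge d.toProd.1 * τ d.edge d.toProd.2)).prod := by
  induction w with
  | nil => rfl
  | cons ha p ih =>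
    simp [walkSign, ih, SimpleGraph.Dart.edge, mul_assoc]

lemma walkSign_eq_finprod (τ : Sym2 V → V → ℤˣ) {u v : V} (w : G.Walk u v) :
    walkSign G τ w = ∏ i : Fin w.length,
      (τ (dartAt w i).edge (dartAt w i).toProd.1 * τ (dartAt w i).edge (dartAt w i).toProd.2) := by
  rw [walkSign_eq_prod, ← Fin.prod_univ_fun_getElem w.darts
    (fun d => τ d.edge d.toProd.1 * τ d.edge d.toProd.2)]
  exact Fintype.prod_equiv (finCongr w.length_darts.symm)
    (fun i => τ (dartAt w i).edge (dartAt w i).toProd.1 * τ (dartAt w i).edge (dartAt w i).toProd.2)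
    (fun i => τ (w.darts[(i:ℕ)]).edge (w.darts[(i:ℕ)]).toProd.1 *
      τ (w.darts[(i:ℕ)]).edge (w.darts[(i:ℕ)]).toProd.2) (fun i => rfl) |>.symm

lemma csucc_of_lt {n : ℕ} (i : Fin n) (h : (i : ℕ) + 1 < n) :
    csucc i = ⟨(i : ℕ) + 1, h⟩ := by
  apply Fin.ext
  simp [csucc, Nat.mod_eq_of_lt h]

lemma csucc_of_eq {n : ℕ} (i : Fin n) (h : (i : ℕ) + 1 = n) :
    csucc i = ⟨0, i.pos⟩ := by
  apply Fin.ext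
  simp [csucc, h]

lemma csucc_bijective (n : ℕ) : Function.Bijective (csucc : Fin n → Fin n) := by
  rw [← Finite.injective_iff_bijective]
  intro a b hab
  have key : ∀ k : Fin n, ((k : ℕ) + 1) % n = if (k : ℕ) + 1 = n then 0 else (k : ℕ) + 1 := by
    intro k
    by_cases h : (k : ℕ) + 1 < n
    · rw [Nat.mod_eq_of_lt h, if_neg (by omega)]
    · have h' : (k : ℕ) + 1 = n := by have := k.2; omega
      rw [if_pos h', h', Nat.mod_self]
  have hv : ((a : ℕ) + 1) % n = ((b : ℕ) + 1) % n := congrArg Fin.val hab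
  rw [key a, key b] at hv
  have ha := a.2; have hb := b.2
  apply Fin.ext
  split_ifs at hv <;> omega

variable (G) in
/-- The multiplicative step factor at edge term `i` of a closed walk. -/
def stepF (τ : Sym2 V → V → ℤˣ) {v : V} (w : G.Walk v v) (i : Fin w.length) : ℤˣ :=
  -(τ (dartAt w i).edge (dartAt w i).toProd.2 *
      τ (dartAt w (csucc i)).edge (dartAt w i).toProd.2)

variable (G) in
def stepFN (τ : Sym2 V → V → ℤˣ) {v : V} (w : G.Walk v v) (j : ℕ) : ℤˣ :=
  if h : j < w.length then stepF G τ w ⟨j, h⟩ else 1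

variable (G) in
def kapN (τ : Sym2 V → V → ℤˣ) {v : V} (w : G.Walk v v) (k : ℕ) : ℤˣ :=
  ∏ j ∈ Finset.range k, stepFN G τ w j

lemma dart_chain (τ : Sym2 V → V → ℤˣ) {v : V} (w : G.Walk v v) (i : Fin w.length) :
    (dartAt w i).toProd.2 = (dartAt w (csucc i)).toProd.1 := by
  have h2 : ((i : ℕ)) < w.darts.length := by rw [w.length_darts]; exact i.2
  rcases (by have := i.2; omega : (i : ℕ) + 1 = w.length ∨ (i : ℕ) + 1 < w.length) with h | h
  · rw [csucc_of_eq i h, dartAt_def, dartAt_def, darts_getElem_snd _ _ h2,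
      darts_getElem_fst _ _ (by rw [w.length_darts]; exact i.pos)]
    show w.getVert ((i : ℕ) + 1) = w.getVert 0
    rw [h, SimpleGraph.Walk.getVert_length, SimpleGraph.Walk.getVert_zero]
  · rw [csucc_of_lt i h, dartAt_def, dartAt_def, darts_getElem_snd _ _ h2,
      darts_getElem_fst _ _ (by rw [w.length_darts]; exact h)]

lemma prod_stepF (τ : Sym2 V → V → ℤˣ) {v : V} (w : G.Walk v v) :
    (∏ i : Fin w.length, stepF G τ w i) = mu G τ w := by
  have step1 : ∀ i : Fin w.length, stepF G τ w i =
      (-1) * (τ (dartAt w i).edge (dartAt w i).toProd.2 *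
        τ (dartAt w (csucc i)).edge (dartAt w (csucc i)).toProd.1) := by
    intro i
    rw [stepF, ← dart_chain τ w i, neg_eq_neg_one_mul]
  calc (∏ i : Fin w.length, stepF G τ w i)
      = ∏ i : Fin w.length, ((-1) * (τ (dartAt w i).edge (dartAt w i).toProd.2 *
          τ (dartAt w (csucc i)).edge (dartAt w (csucc i)).toProd.1)) :=
        Finset.prod_congr rfl (fun i _ => step1 i)
    _ = ((-1) ^ w.length) * ((∏ i : Fin w.length, τ (dartAt w i).edge (dartAt w i).toProd.2) *
          ∏ i : Fin w.length, τ (dartAt w (csucc i)).edge (dartAt w (csucc i)).toProd.1) := by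
        rw [Finset.prod_mul_distrib, Finset.prod_mul_distrib, Finset.prod_const]
        simp [Finset.card_univ]
    _ = ((-1) ^ w.length) * ((∏ i : Fin w.length, τ (dartAt w i).edge (dartAt w i).toProd.2) *
          ∏ i : Fin w.length, τ (dartAt w i).edge (dartAt w i).toProd.1) := by
        congr 1
        congr 1
        exact Fintype.prod_bijective csucc (csucc_bijective _) _ _ (fun i => rfl)
    _ = ((-1) ^ w.length) * walkSign G τ w := by
        rw [walkSign_eq_finprod, ← Finset.prod_mul_distrib]
        congr 1
        exact Finset.prod_congr rfl (fun i _ => mul_comm _ _)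
    _ = mu G τ w := rfl

lemma kapN_succ (τ : Sym2 V → V → ℤˣ) {v : V} (w : G.Walk v v) (k : ℕ) (h : k < w.length) :
    kapN G τ w (k + 1) = stepF G τ w ⟨k, h⟩ * kapN G τ w k := by
  rw [kapN, Finset.prod_range_succ, kapN, mul_comm, stepFN, dif_pos h]

lemma flipRel_kap (τ : Sym2 V → V → ℤˣ) {v : V} (w : G.Walk v v) (hw : mu G τ w = 1) :
    FlipRel G τ w (fun i => kapN G τ w (i : ℕ)) := by
  intro i
  have key : kapN G τ w ((i : ℕ) + 1) = stepF G τ w i * kapN G τ w (i : ℕ) := by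
    simpa using kapN_succ τ w (i : ℕ) i.2
  rcases (by have := i.2; omega : (i : ℕ) + 1 = w.length ∨ (i : ℕ) + 1 < w.length) with h | h
  · have h0 : csucc i = ⟨0, i.pos⟩ := csucc_of_eq i h
    rw [h0]
    show kapN G τ w 0 = _
    have htot : kapN G τ w w.length = 1 := by
      rw [kapN, ← Fin.prod_univ_eq_prod_range, ← hw, ← prod_stepF τ w]
      exact Finset.prod_congr rfl (fun j _ => by rw [stepFN, dif_pos j.2, Fin.eta])
    have : stepF G τ w i * kapN G τ w (i : ℕ) = 1 := by
      rw [← key, h, htot]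
    rw [kapN, Finset.range_zero, Finset.prod_empty, ← this]
    rw [stepF, h0]
  · have h1 : csucc i = ⟨(i : ℕ) + 1, h⟩ := csucc_of_lt i h
    rw [h1]
    show kapN G τ w ((i : ℕ) + 1) = _
    rw [key, stepF, h1]

lemma flipRel_const (τ : Sym2 V → V → ℤˣ) {v : V} (w : G.Walk v v)
    {κ : Fin w.length → ℤˣ} (c : ℤˣ) (h : FlipRel G τ w κ) :
    FlipRel G τ w (fun i => c * κ i) := by
  intro i
  show c * κ (csucc i) = _
  rw [h i, mul_left_comm]

lemma walkSign_append (τ : Sym2 V → V → ℤˣ) {u v x : V} (p : G.Walk u v) (q : G.Walk v x) :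
    walkSign G τ (p.append q) = walkSign G τ p * walkSign G τ q := by
  induction p with
  | nil => simp [walkSign]
  | cons ha p ih =>
    show walkSign G τ (SimpleGraph.Walk.cons ha (p.append q)) = _
    rw [walkSign, walkSign, ih]
    simp [mul_assoc]

lemma mu_append (τ : Sym2 V → V → ℤˣ) {v : V} (p q : G.Walk v v) :
    mu G τ (p.append q) = mu G τ p * mu G τ q := by
  rw [mu, mu, mu, SimpleGraph.Walk.length_append, walkSign_append, pow_add]
  exact mul_mul_mul_comm _ _ _ _

lemma dartAt_append_left {u v x : V} (p : G.Walk u v) (q : G.Walk v x)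
    (i : Fin (p.append q).length) (h : (i : ℕ) < p.length) :
    dartAt (p.append q) i = dartAt p ⟨(i : ℕ), h⟩ := by
  rw [dartAt_def, dartAt_def]
  rw [List.getElem_of_eq (SimpleGraph.Walk.darts_append p q) _]
  exact List.getElem_append_left (by rw [p.length_darts]; exact h)

lemma dartAt_append_right {u v x : V} (p : G.Walk u v) (q : G.Walk v x)
    (i : Fin (p.append q).length) (h : p.length ≤ (i : ℕ)) :
    dartAt (p.append q) i = dartAt q ⟨(i : ℕ) - p.length, by
      have h2 := i.2
      have h3 : (p.append q).length = p.length + q.length :=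
        SimpleGraph.Walk.length_append p q
      omega⟩ := by
  rw [dartAt_def, dartAt_def]
  rw [List.getElem_of_eq (SimpleGraph.Walk.darts_append p q) _]
  have h' : p.darts.length ≤ (i : ℕ) := by rw [p.length_darts]; exact h
  rw [List.getElem_append_right h']
  simp only [SimpleGraph.Walk.length_darts]

lemma dartAt_append_right' {u v x : V} (p : G.Walk u v) (q : G.Walk v x)
    (i : Fin (p.append q).length) (j : Fin q.length) (h : (i : ℕ) = p.length + (j : ℕ)) :
    dartAt (p.append q) i = dartAt q j := by
  rw [dartAt_append_right p q i (by omega)]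
  congr 1
  apply Fin.ext
  show (i : ℕ) - p.length = (j : ℕ)
  omega

lemma stepFN_append_left (τ : Sym2 V → V → ℤˣ) {v : V} (p q : G.Walk v v)
    (j : ℕ) (h : j + 1 < p.length) :
    stepFN G τ (p.append q) j = stepFN G τ p j := by
  have hN : (p.append q).length = p.length + q.length := SimpleGraph.Walk.length_append p q
  have hj : j < p.length := by omega
  have hjN : j < (p.append q).length := by omega
  have hj1N : j + 1 < (p.append q).length := by omega
  rw [stepFN, stepFN, dif_pos hjN, dif_pos hj]
  rw [stepF, stepF]
  rw [csucc_of_lt ⟨j, hjN⟩ (by simpa using hj1N), csucc_of_lt ⟨j, hj⟩ (by simpa using h)]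
  rw [dartAt_append_left p q ⟨j, hjN⟩ hj, dartAt_append_left p q ⟨j+1, hj1N⟩ h]

lemma stepFN_append_right (τ : Sym2 V → V → ℤˣ) {v : V} (p q : G.Walk v v)
    (j : ℕ) (h1 : p.length ≤ j) (h2 : j + 1 < (p.append q).length) :
    stepFN G τ (p.append q) j = stepFN G τ q (j - p.length) := by
  have hN : (p.append q).length = p.length + q.length := SimpleGraph.Walk.length_append p q
  have hjN : j < (p.append q).length := by omega
  have hjq : j - p.length < q.length := by omega
  have hjq1 : (j - p.length) + 1 < q.length := by omega
  rw [stepFN, stepFN, dif_pos hjN, dif_pos hjq]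
  rw [stepF, stepF]
  rw [csucc_of_lt ⟨j, hjN⟩ (by simpa using h2), csucc_of_lt ⟨j - p.length, hjq⟩ (by simpa using hjq1)]
  rw [dartAt_append_right' p q ⟨j, hjN⟩ ⟨j - p.length, hjq⟩ (by show j = p.length + (j - p.length); omega),
    dartAt_append_right' p q ⟨j + 1, h2⟩ ⟨(j - p.length) + 1, hjq1⟩ (by show j + 1 = p.length + ((j - p.length) + 1); omega)]

lemma kapN_append_left (τ : Sym2 V → V → ℤˣ) {v : V} (p q : G.Walk v v)
    (k : ℕ) (h : k < p.length) :
    kapN G τ (p.append q) k = kapN G τ p k := by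
  rw [kapN, kapN]
  refine Finset.prod_congr rfl (fun j hj => ?_)
  rw [Finset.mem_range] at hj
  exact stepFN_append_left τ p q j (by omega)

lemma kapN_append_right (τ : Sym2 V → V → ℤˣ) {v : V} (p q : G.Walk v v)
    (k : ℕ) (h1 : p.length ≤ k) (h2 : k < (p.append q).length) :
    kapN G τ (p.append q) k =
      kapN G τ (p.append q) p.length * kapN G τ q (k - p.length) := by
  have hk : k = p.length + (k - p.length) := by omega
  rw [kapN, hk, Finset.prod_range_add, ← kapN, ← hk]
  congr 1
  rw [kapN]
  refine Finset.prod_congr rfl (fun j hj => ?_)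
  rw [Finset.mem_range] at hj
  rw [stepFN_append_right τ p q (p.length + j) (by omega) (by omega)]
  congr 1
  omega

end Aux


/-- For two even closed walks w and w' with the same first vertex,
choosing the associated binomials appropriately (each is defined only up to sign,
i.e. up to the choice of section-parity assignment κ), the binomial of the
concatenation satisfies B⁺_{w+w'} = B⁺_w·B⁺_{w'} and B⁻_{w+w'} = B⁻_w·B⁻_{w'}. -/
theorem binomial_append [DecidableEq V] (K : Type*) [Field K]
    (G : SimpleGraph V) [Fintype G.edgeSet] (τ : Sym2 V → V → ℤˣ) (v : V)
    (w w' : G.Walk v v) (hw : mu G τ w = 1) (hw' : mu G τ w' = 1) :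
    ∃ (κ : Fin w.length → ℤˣ) (κ' : Fin w'.length → ℤˣ)
      (κ'' : Fin (w.append w').length → ℤˣ),
      FlipRel G τ w κ ∧ FlipRel G τ w' κ' ∧ FlipRel G τ (w.append w') κ'' ∧
      Bpos K (w.append w') κ'' = Bpos K w κ * Bpos K w' κ' ∧
      Bneg K (w.append w') κ'' = Bneg K w κ * Bneg K w' κ' := by
  classical
  have hN : (w.append w').length = w.length + w'.length :=
    SimpleGraph.Walk.length_append w w'
  set c : ℤˣ := kapN G τ (w.append w') w.length with hc
  have key : ∀ s : ℤˣ,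
      (∏ i ∈ Finset.univ.filter
          (fun i : Fin (w.append w').length => kapN G τ (w.append w') (i : ℕ) = s),
        MvPolynomial.X (⟨(dartAt (w.append w') i).edge, (dartAt (w.append w') i).edge_mem⟩ :
          G.edgeSet) : MvPolynomial G.edgeSet K) =
      (∏ i ∈ Finset.univ.filter (fun i : Fin w.length => kapN G τ w (i : ℕ) = s),
        MvPolynomial.X (⟨(dartAt w i).edge, (dartAt w i).edge_mem⟩ : G.edgeSet)) *
      ∏ j ∈ Finset.univ.filter (fun j : Fin w'.length => c * kapN G τ w' (j : ℕ) = s),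
        MvPolynomial.X (⟨(dartAt w' j).edge, (dartAt w' j).edge_mem⟩ : G.edgeSet) := by
    intro s
    rw [Finset.prod_filter, Finset.prod_filter, Finset.prod_filter]
    set e : Fin w.length ⊕ Fin w'.length ≃ Fin (w.append w').length :=
      finSumFinEquiv.trans (finCongr hN.symm) with he
    rw [← Equiv.prod_comp e (fun i : Fin (w.append w').length =>
      if kapN G τ (w.append w') (i : ℕ) = s then
        MvPolynomial.X (⟨(dartAt (w.append w') i).edge, (dartAt (w.append w') i).edge_mem⟩ :
          G.edgeSet) else (1 : MvPolynomial G.edgeSet K)), Fintype.prod_sum_type]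
    congr 1
    · refine Finset.prod_congr rfl (fun a _ => ?_)
      have hval : ((e (Sum.inl a)) : ℕ) = (a : ℕ) := by
        simp [he]
      have hkap : kapN G τ (w.append w') ((e (Sum.inl a)) : ℕ) = kapN G τ w (a : ℕ) := by
        rw [hval]
        exact kapN_append_left τ w w' _ a.2
      have hdart : dartAt (w.append w') (e (Sum.inl a)) = dartAt w a := by
        rw [dartAt_append_left w w' _ (by rw [hval]; exact a.2)]
        exact congrArg (dartAt w) (Fin.ext hval)
      rw [hkap, hdart]
    · refine Finset.prod_congr rfl (fun b _ => ?_)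
      have hval : ((e (Sum.inr b)) : ℕ) = w.length + (b : ℕ) := by
        simp [he]
      have hkap : kapN G τ (w.append w') ((e (Sum.inr b)) : ℕ) = c * kapN G τ w' (b : ℕ) := by
        rw [hval, kapN_append_right τ w w' _ (by omega) (by rw [← hval]; exact (e (Sum.inr b)).2)]
        rw [hc]
        have harith : w.length + (b : ℕ) - w.length = (b : ℕ) := by omega
        rw [harith]
      have hdart : dartAt (w.append w') (e (Sum.inr b)) = dartAt w' b := by
        exact dartAt_append_right' w w' _ b hval
      rw [hkap, hdart]
  refine ⟨fun i => kapN G τ w (i : ℕ),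
          fun j => c * kapN G τ w' (j : ℕ),
          fun i => kapN G τ (w.append w') (i : ℕ), ?_, ?_, ?_, ?_, ?_⟩
  · exact flipRel_kap τ w hw
  · exact flipRel_const τ w' c (flipRel_kap τ w' hw')
  · exact flipRel_kap τ (w.append w') (by rw [mu_append, hw, hw', one_mul])
  · exact key 1
  · exact key (-1)
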